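/- (Sufficient condition for a positive noisy information threshold under non-identically distributed binary symmetric noise.) Let X = (X_1, …, X_p) ∈ {−1, +1}^p have a tree-structured (Ising) distribution with respect to a tree T = (V, E), with information threshold I^o > 0 and pairwise correlations satisfying |E[X_i X_j]| ∈ (0, 1) for all (i, j) ∈ E. Let Y_i = N_i X_i, where the N_i ∈ {−1, +1} are independent of X and of each other, with P(N_i = −1) = q_i ∈ [0, 1/2) (i.e., each Y_i is the output of a binary symmetric channel with crossover probability q_i). If for all i, j ∈ V the ratio (1 − 2q_i)/(1 − 2q_j) lies in the open interval ( max_{(i,j)∈E} |E[X_i X_j]| , 1 / max_{(i,j)∈E} |E[X_i X_j]| ), then the noisy information threshold satisfies I^o_† > 0. In particular, if all q_i are equal the condition always holds. -/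

import Mathlib

set_option linter.unusedSectionVars false

open scoped Classical

noncomputable section

namespace TreePaper

/-- `f` is a probability mass function. -/
def IsProbDist {α : Type*} (f : α → ℝ) : Prop :=
  (∀ a, 0 ≤ f a) ∧ ∑' a, f a = 1

/-- Shannon entropy (base 2) of a pmf, with the convention `0 · log 0 = 0`. -/
def ent {α : Type*} (f : α → ℝ) : ℝ := -∑' a, f a * Real.logb 2 (f a)

variable {V : Type*} [Fintype V] [DecidableEq V] {A : Type*}

/-- Marginal pmf of the coordinate `i`. -/
def marg1 (P : (V → A) → ℝ) (i : V) : A → ℝ :=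
  fun a => ∑' x : V → A, if x i = a then P x else 0

/-- Joint pmf of the pair of coordinates `(i, j)`. -/
def marg2 (P : (V → A) → ℝ) (i j : V) : A × A → ℝ :=
  fun ab => ∑' x : V → A, if x i = ab.1 ∧ x j = ab.2 then P x else 0

theorem marg2_symm (P : (V → A) → ℝ) (i j : V) (a b : A) :
    marg2 P i j (a, b) = marg2 P j i (b, a) :=
  tsum_congr fun _ => if_congr and_comm rfl rfl

/-- Mutual information (in bits) between the coordinates `i` and `j`,
`I(X_i; X_j) = H(X_i) + H(X_j) − H(X_i, X_j)`. -/
def mi (P : (V → A) → ℝ) (i j : V) : ℝ :=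
  ent (marg1 P i) + ent (marg1 P j) - ent (marg2 P i j)

/-- The factor attached to an edge in the tree factorization of a Markov random field. -/
def edgeFactor (P : (V → A) → ℝ) (x : V → A) : Sym2 V → ℝ :=
  Sym2.lift ⟨fun i j => marg2 P i j (x i, x j) / (marg1 P i (x i) * marg1 P j (x j)),
    fun i j => by
      dsimp only
      rw [marg2_symm P i j (x i) (x j), mul_comm (marg1 P i (x i)) (marg1 P j (x j))]⟩

/-- The distribution `P` is Markov with respect to (i.e. factorizes according to)
the tree `T`:  `p(x) = ∏_i p(x_i) ∏_{(i,j) ∈ E} p(x_i, x_j) / (p(x_i) p(x_j))`. -/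
def IsMarkovTree (T : SimpleGraph V) (P : (V → A) → ℝ) : Prop :=
  ∀ x : V → A,
    P x = (∏ i, marg1 P i (x i)) *
      ∏ e : Sym2 V, if e ∈ T.edgeSet then edgeFactor P x e else 1

/-- The tuple `(s(w, w̄), u, ū)` lies in the feasibility set `EV²`:  `s(w, w̄)` is an
edge of `T` lying on the unique path of `T` from `u` to `ū`, and this path has
at least two edges. -/
def EVtuple (T : SimpleGraph V) (w wb u ub : V) : Prop :=
  T.Adj w wb ∧ ∃ p : T.Walk u ub, p.IsPath ∧ s(w, wb) ∈ p.edges ∧ 2 ≤ p.length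

/-- The information threshold determined by the tree `T` and the
pairwise "mutual information" weights `I`:
`(1/2) · min_{(e,u,ū) ∈ EV²} ( I(w, w̄) − I(u, ū) )`. -/
def thresh (T : SimpleGraph V) (I : V → V → ℝ) : ℝ :=
  (1 / 2) * sInf {x : ℝ | ∃ w wb u ub : V, EVtuple T w wb u ub ∧ x = I w wb - I u ub}

/-- Total weight of the graph `G` under the edge weights `I`. -/
def score (I : V → V → ℝ) (G : SimpleGraph V) : ℝ :=
  ∑ i, ∑ j, if G.Adj i j then I i j else 0

/-- `G` is a maximum-weight spanning tree for the weights `I`. -/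
def IsMaxSpanTree (I : V → V → ℝ) (G : SimpleGraph V) : Prop :=
  G.IsTree ∧ ∀ G' : SimpleGraph V, G'.IsTree → score I G' ≤ score I G

/-- Spin value of a binary symbol: `true ↦ +1`, `false ↦ −1`. -/
def spin : Bool → ℝ := fun b => if b then 1 else -1

/-- The correlation `E[X_i X_j]` of the `±1`-valued coordinates `i` and `j`. -/
def corr (P : (V → Bool) → ℝ) (i j : V) : ℝ :=
  ∑ ab : Bool × Bool, marg2 P i j ab * spin ab.1 * spin ab.2

/-- Probability mass of the Bernoulli flip indicator with flip probability `q`. -/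
def bern (q : ℝ) : Bool → ℝ := fun b => if b then q else 1 - q

/-- Shannon entropy (base 2) of a pmf on a finite alphabet. -/
def entF {α : Type*} [Fintype α] (f : α → ℝ) : ℝ :=
  -∑ a, f a * Real.logb 2 (f a)

/-- Mutual information (base 2) of a pair with joint pmf `f`. -/
def miF {α β : Type*} [Fintype α] [Fintype β] (f : α × β → ℝ) : ℝ :=
  entF (fun a => ∑ b, f (a, b)) + entF (fun b => ∑ a, f (a, b)) - entF f

/-- The joint pmf of the noisy pair `(Y_i, Y_j) = (N_i X_i, N_j X_j)`, where
`N_i` flips the `±1`-valued `X_i` with probability `q i`, independently across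
nodes and independently of `X` (a binary symmetric channel on each node;
in the `Bool` encoding, multiplication of spins is `xor` of flips). -/
def noisyPair (P : (V → Bool) → ℝ) (q : V → ℝ) (i j : V) : Bool × Bool → ℝ :=
  fun ab => ∑ x : Bool × Bool, ∑ nn : Bool × Bool,
    marg2 P i j x * bern (q i) nn.1 * bern (q j) nn.2 *
      (if (xor nn.1 x.1, xor nn.2 x.2) = ab then 1 else 0)

/-- The maximal absolute edge correlation `max_{(i,j) ∈ E} |E[X_i X_j]|`. -/
def maxEdgeCorr (T : SimpleGraph V) (P : (V → Bool) → ℝ) : ℝ :=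
  sSup {x : ℝ | ∃ a b : V, T.Adj a b ∧ x = |corr P a b|}


/-! ### Auxiliary lemmas -/

section AuxAnalytic

lemma spin_sq (b : Bool) : spin b * spin b = 1 := by cases b <;> simp [spin]

/-- The function such that the mutual information of a symmetric pair with
correlation `ρ` equals `hfun ρ`. -/
def hfun (ρ : ℝ) : ℝ :=
  ((1 + ρ) * Real.log (1 + ρ) + (1 - ρ) * Real.log (1 - ρ)) / (2 * Real.log 2)

lemma hfun_neg (ρ : ℝ) : hfun (-ρ) = hfun ρ := by unfold hfun; ring_nf

lemma hfun_abs (ρ : ℝ) : hfun |ρ| = hfun ρ := by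
  rcases abs_cases ρ with ⟨h, _⟩ | ⟨h, _⟩
  · rw [h]
  · rw [h, hfun_neg]

lemma hfun_continuous : Continuous hfun := by
  have : hfun = fun ρ => (-(Real.negMulLog (1 + ρ)) + -(Real.negMulLog (1 - ρ))) / (2 * Real.log 2) := by
    funext ρ; simp [hfun, Real.negMulLog]; ring
  rw [this]
  fun_prop

lemma hfun_strictMonoOn : StrictMonoOn hfun (Set.Icc (0:ℝ) 1) := by
  apply strictMonoOn_of_deriv_pos (convex_Icc 0 1) hfun_continuous.continuousOn
  intro x hx
  rw [interior_Icc] at hx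
  obtain ⟨hx0, hx1⟩ := hx
  have h1p : (0:ℝ) < 1 + x := by linarith
  have h1m : (0:ℝ) < 1 - x := by linarith
  have hd : HasDerivAt hfun ((Real.log (1 + x) - Real.log (1 - x)) / (2 * Real.log 2)) x := by
    have ha : HasDerivAt (fun ρ : ℝ => (1 + ρ) * Real.log (1 + ρ))
        (1 * Real.log (1 + x) + (1 + x) * ((1 + x)⁻¹ * 1)) x := by
      have h1 : HasDerivAt (fun ρ : ℝ => 1 + ρ) 1 x := (hasDerivAt_id x).const_add 1
      exact h1.mul ((Real.hasDerivAt_log h1p.ne').comp x h1)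
    have hb : HasDerivAt (fun ρ : ℝ => (1 - ρ) * Real.log (1 - ρ))
        ((-1) * Real.log (1 - x) + (1 - x) * ((1 - x)⁻¹ * (-1))) x := by
      have h1 : HasDerivAt (fun ρ : ℝ => 1 - ρ) (-1) x := by
        exact (hasDerivAt_id' x).const_sub 1
      exact h1.mul ((Real.hasDerivAt_log h1m.ne').comp x h1)
    have := (ha.add hb).div_const (2 * Real.log 2)
    refine this.congr_deriv ?_
    rw [show (1 + x) * ((1 + x)⁻¹ * 1) = 1 by field_simp,
      show (1 - x) * ((1 - x)⁻¹ * (-1)) = -1 by field_simp]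
    ring
  rw [hd.deriv]
  have : Real.log (1 - x) < Real.log (1 + x) := Real.log_lt_log h1m (by linarith)
  have h2 : (0:ℝ) < 2 * Real.log 2 := by positivity
  exact div_pos (by linarith) h2

lemma mul_log_div_four (t : ℝ) : t * Real.log (t / 4) = t * Real.log t - t * (2 * Real.log 2) := by
  rcases eq_or_ne t 0 with rfl | ht
  · simp
  · rw [Real.log_div ht (by norm_num)]
    have : Real.log 4 = 2 * Real.log 2 := by
      rw [show (4:ℝ) = 2 ^ 2 by norm_num, Real.log_pow]; push_cast; ring
    rw [this]; ring

lemma logb_key (t : ℝ) : t/4 * Real.logb 2 (t/4) = (t * Real.log t)/(4*Real.log 2) - t/2 := by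
  have hlog2 : Real.log 2 ≠ 0 := by positivity
  simp only [Real.logb]
  rw [show t/4 * (Real.log (t/4) / Real.log 2) = (t * Real.log (t/4)) / (4 * Real.log 2) by ring,
    mul_log_div_four]
  field_simp
  ring

lemma miF_of_corr (ρ : ℝ) :
    miF (fun ab : Bool × Bool => (1 + spin ab.1 * spin ab.2 * ρ) / 4) = hfun ρ := by
  have hlog2 : Real.log 2 ≠ 0 := by positivity
  have hmarg : ∀ g : Bool → ℝ, (∀ a, g a = 1/2) → entF g = 1 := by
    intro g hg
    have : entF g = -(2 * ((1/2) * Real.logb 2 (1/2))) := by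
      simp only [entF, Fintype.sum_bool, hg]; ring
    rw [this, show (1:ℝ)/2 = 2⁻¹ by norm_num, Real.logb_inv,
      Real.logb_self_eq_one (by norm_num : (1:ℝ) < 2)]
    ring
  unfold miF
  rw [hmarg _ (fun a => by cases a <;> simp [Fintype.sum_bool, spin] <;> try ring),
      hmarg _ (fun b => by cases b <;> simp [Fintype.sum_bool, spin] <;> try ring)]
  have hent : entF (fun ab : Bool × Bool => (1 + spin ab.1 * spin ab.2 * ρ) / 4)
      = -(2 * ((1 + ρ)/4 * Real.logb 2 ((1 + ρ)/4)) + 2 * ((1 - ρ)/4 * Real.logb 2 ((1 - ρ)/4))) := by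
    simp only [entF, Fintype.sum_prod_type, Fintype.sum_bool, spin]
    norm_num
    ring_nf
  rw [hent, logb_key, logb_key]
  unfold hfun
  field_simp
  ring

end AuxAnalytic

section AuxGraph

variable {V : Type*} [Fintype V] [DecidableEq V]

lemma walk_edge_parity {G : SimpleGraph V} {a b : V} (p : G.Walk a b) (v : V) :
    Even (p.edges.countP (fun e => decide (v ∈ e)) +
      ((if v = a then 1 else 0) + (if v = b then 1 else 0))) := by
  induction p with
  | nil =>
    simp only [SimpleGraph.Walk.edges_nil, List.countP_nil, zero_add]
    by_cases h : v = a <;> simp [h]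
  | @cons u w c h q ih =>
    simp only [SimpleGraph.Walk.edges_cons, List.countP_cons, decide_eq_true_eq, Sym2.mem_iff]
    have hsum : (if (v = u ∨ v = w) then (1:ℕ) else 0)
        = (if v = u then 1 else 0) + (if v = w then 1 else 0) := by
      by_cases h1 : v = u <;> by_cases h2 : v = w
      · exact absurd (h1.symm.trans h2) h.ne
      all_goals simp [h1, h2, h.ne, Ne.symm h.ne]
    rw [hsum]
    rw [Nat.even_iff] at ih ⊢
    omega

lemma sym2_cnt_sum (F : Finset V) {x y : V} (hxy : x ≠ y) :
    ∑ v ∈ F, (if v ∈ s(x, y) then (1:ℕ) else 0)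
      = (if x ∈ F then 1 else 0) + (if y ∈ F then 1 else 0) := by
  have hpt : ∀ v, (if v ∈ s(x, y) then (1:ℕ) else 0)
      = (if v = x then 1 else 0) + (if v = y then 1 else 0) := by
    intro v
    by_cases h1 : v = x <;> by_cases h2 : v = y
    · exact absurd (h1.symm.trans h2) hxy
    all_goals simp [Sym2.mem_iff, h1, h2, hxy, Ne.symm hxy]
  simp_rw [hpt]
  rw [Finset.sum_add_distrib, Finset.sum_ite_eq' F x (fun _ => (1:ℕ)),
    Finset.sum_ite_eq' F y (fun _ => (1:ℕ))]

lemma even_subgraph_empty {G : SimpleGraph V} (hG : G.IsAcyclic) (S : Finset (Sym2 V))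
    (hS : ∀ e ∈ S, e ∈ G.edgeSet)
    (hEven : ∀ v, Even ((S.filter (fun e => v ∈ e)).card)) : S = ∅ := by
  by_contra hne
  obtain ⟨e, he⟩ := Finset.nonempty_of_ne_empty hne
  revert he
  induction e using Sym2.inductionOn with | _ a b => ?_
  intro he
  have hedge : s(a, b) ∈ G.edgeSet := hS _ he
  have hadj : G.Adj a b := hedge
  have hbridge := (SimpleGraph.isAcyclic_iff_forall_edge_isBridge.mp hG) hedge
  rw [SimpleGraph.isBridge_iff] at hbridge
  have hnr := hbridge
  set G' := G \ SimpleGraph.fromEdgeSet {s(a, b)} with hG'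
  set F : Finset V := Finset.univ.filter (fun v => G'.Reachable a v) with hF
  have haF : a ∈ F :=
    Finset.mem_filter.mpr ⟨Finset.mem_univ _, SimpleGraph.Reachable.refl a⟩
  have hbF : b ∉ F := by simp [hF]; exact hnr
  have hcard : ∀ v, (S.filter (fun e => v ∈ e)).card = ∑ f ∈ S, if v ∈ f then 1 else 0 :=
    fun v => Finset.card_filter _ _
  have hswap : ∑ v ∈ F, (S.filter (fun e => v ∈ e)).card
      = ∑ f ∈ S, ∑ v ∈ F, if v ∈ f then 1 else 0 := by
    simp_rw [hcard]; exact Finset.sum_comm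
  have hcnt_even : ∀ f ∈ S, f ≠ s(a, b) → (∑ v ∈ F, if v ∈ f then (1:ℕ) else 0) % 2 = 0 := by
    intro f
    induction f using Sym2.inductionOn with | _ x y => ?_
    intro hf hnef
    have hxy : G.Adj x y := hS _ hf
    have hxyne : x ≠ y := hxy.ne
    rw [sym2_cnt_sum F hxyne]
    have hadj' : G'.Adj x y := by
      rw [hG', SimpleGraph.sdiff_adj]
      refine ⟨hxy, ?_⟩
      rw [SimpleGraph.fromEdgeSet_adj]
      rintro ⟨hm, -⟩
      exact hnef (by simpa using hm)
    have hiff : x ∈ F ↔ y ∈ F := by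
      simp only [hF, Finset.mem_filter, Finset.mem_univ, true_and]
      exact ⟨fun hr => hr.trans hadj'.reachable, fun hr => hr.trans hadj'.symm.reachable⟩
    by_cases hx : x ∈ F
    · rw [if_pos hx, if_pos (hiff.mp hx)]
    · rw [if_neg hx, if_neg (fun hy => hx (hiff.mpr hy))]
  have hcnt_e : ∑ v ∈ F, (if v ∈ s(a, b) then (1:ℕ) else 0) = 1 := by
    rw [sym2_cnt_sum F hadj.ne, if_pos haF, if_neg hbF]
  have hN_even : (∑ v ∈ F, (S.filter (fun e => v ∈ e)).card) % 2 = 0 := by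
    rw [Finset.sum_nat_mod]
    have : ∀ v ∈ F, (S.filter (fun e => v ∈ e)).card % 2 = 0 :=
      fun v _ => Nat.even_iff.mp (hEven v)
    rw [Finset.sum_congr rfl this]
    simp
  have hsplit : ∑ f ∈ S, (∑ v ∈ F, if v ∈ f then (1:ℕ) else 0)
      = (∑ v ∈ F, if v ∈ s(a,b) then (1:ℕ) else 0)
        + ∑ f ∈ S.erase s(a,b), ∑ v ∈ F, if v ∈ f then (1:ℕ) else 0 :=
    (Finset.add_sum_erase S _ he).symm
  have herase : (∑ f ∈ S.erase s(a,b), ∑ v ∈ F, if v ∈ f then (1:ℕ) else 0) % 2 = 0 := by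
    rw [Finset.sum_nat_mod]
    have : ∀ f ∈ S.erase s(a,b), (∑ v ∈ F, if v ∈ f then (1:ℕ) else 0) % 2 = 0 := by
      intro f hf
      exact hcnt_even f (Finset.mem_of_mem_erase hf) (Finset.ne_of_mem_erase hf)
    rw [Finset.sum_congr rfl this]
    simp
  rw [hswap, hsplit, hcnt_e] at hN_even
  omega

lemma parity_unique {G : SimpleGraph V} (hG : G.IsAcyclic) (S₁ S₂ : Finset (Sym2 V))
    (h1 : ∀ e ∈ S₁, e ∈ G.edgeSet) (h2 : ∀ e ∈ S₂, e ∈ G.edgeSet)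
    (h : ∀ v, (S₁.filter (fun e => v ∈ e)).card % 2 = (S₂.filter (fun e => v ∈ e)).card % 2) :
    S₁ = S₂ := by
  set Δ : Finset (Sym2 V) := (S₁ \ S₂) ∪ (S₂ \ S₁) with hΔ
  have hΔsub : ∀ e ∈ Δ, e ∈ G.edgeSet := by
    intro e heΔ
    rw [hΔ, Finset.mem_union, Finset.mem_sdiff, Finset.mem_sdiff] at heΔ
    rcases heΔ with ⟨hm, -⟩ | ⟨hm, -⟩
    exacts [h1 _ hm, h2 _ hm]
  have hΔeven : ∀ v, Even ((Δ.filter (fun e => v ∈ e)).card) := by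
    intro v
    have hfsd : ∀ (A B : Finset (Sym2 V)), (A \ B).filter (fun e => v ∈ e)
        = A.filter (fun e => v ∈ e) \ B.filter (fun e => v ∈ e) := by
      intro A B; ext e; simp only [Finset.mem_filter, Finset.mem_sdiff]; tauto
    rw [hΔ, Finset.filter_union, hfsd, hfsd]
    set X := S₁.filter (fun e => v ∈ e)
    set Y := S₂.filter (fun e => v ∈ e)
    have hdisj : Disjoint (X \ Y) (Y \ X) := disjoint_sdiff_sdiff
    rw [Finset.card_union_of_disjoint hdisj]
    have e1 : (X \ Y).card = X.card - (X ∩ Y).card := by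
      rw [Finset.card_sdiff, Finset.inter_comm]
    have e2 : (Y \ X).card = Y.card - (Y ∩ X).card := by
      rw [Finset.card_sdiff, Finset.inter_comm]
    have e3 : (Y ∩ X).card = (X ∩ Y).card := by rw [Finset.inter_comm]
    have le1 : (X ∩ Y).card ≤ X.card := Finset.card_le_card Finset.inter_subset_left
    have le2 : (Y ∩ X).card ≤ Y.card := Finset.card_le_card Finset.inter_subset_left
    have hpar : X.card % 2 = Y.card % 2 := h v
    rw [Nat.even_iff]
    omega
  have : Δ = ∅ := even_subgraph_empty hG Δ hΔsub hΔeven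
  rw [hΔ, Finset.union_eq_empty] at this
  obtain ⟨ha, hb⟩ := this
  exact Finset.Subset.antisymm (fun x hx => by
      by_contra hxn
      exact absurd (Finset.mem_sdiff.mpr ⟨hx, hxn⟩) (by simp [ha] : x ∉ S₁ \ S₂))
    (fun x hx => by
      by_contra hxn
      exact absurd (Finset.mem_sdiff.mpr ⟨hx, hxn⟩) (by simp [hb] : x ∉ S₂ \ S₁))

end AuxGraph

section AuxCorr

variable {V : Type*} [Fintype V] [DecidableEq V]

lemma corr_symm (P : (V → Bool) → ℝ) (i j : V) : corr P i j = corr P j i := by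
  unfold corr
  rw [← Equiv.sum_comp (Equiv.prodComm Bool Bool)]
  apply Finset.sum_congr rfl
  intro ab _
  rw [marg2_symm]
  simp [Equiv.prodComm]
  ring

/-- The correlation attached to an edge. -/
def corrE (P : (V → Bool) → ℝ) : Sym2 V → ℝ :=
  Sym2.lift ⟨fun i j => corr P i j, fun i j => corr_symm P i j⟩

@[simp] lemma corrE_mk (P : (V → Bool) → ℝ) (i j : V) : corrE P s(i, j) = corr P i j := rfl

/-- The spin product attached to an edge. -/
def espE (x : V → Bool) : Sym2 V → ℝ :=
  Sym2.lift ⟨fun i j => spin (x i) * spin (x j), fun i j => mul_comm _ _⟩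

@[simp] lemma espE_mk (x : V → Bool) (i j : V) : espE x s(i, j) = spin (x i) * spin (x j) := rfl

lemma corr_eq_sum (P : (V → Bool) → ℝ) (i j : V) :
    corr P i j = ∑ x : V → Bool, P x * (spin (x i) * spin (x j)) := by
  unfold corr marg2
  simp_rw [tsum_fintype]
  simp_rw [Finset.sum_mul]
  rw [Finset.sum_comm]
  apply Finset.sum_congr rfl
  intro x _
  rw [Fintype.sum_prod_type]
  simp only [Fintype.sum_bool]
  cases hxi : x i <;> cases hxj : x j <;> simp [spin] <;> ring

lemma sum_P_eq_one (P : (V → Bool) → ℝ) (hP : IsProbDist P) :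
    ∑ x : V → Bool, P x = 1 := by
  rw [← hP.2, tsum_fintype]

lemma corr_self (P : (V → Bool) → ℝ) (hP : IsProbDist P) (i : V) : corr P i i = 1 := by
  rw [corr_eq_sum]
  simp_rw [spin_sq, mul_one]
  exact sum_P_eq_one P hP

lemma marg2_row (P : (V → Bool) → ℝ) (i j : V) (a : Bool) :
    marg2 P i j (a, true) + marg2 P i j (a, false) = marg1 P i a := by
  unfold marg2 marg1
  simp_rw [tsum_fintype]
  rw [← Finset.sum_add_distrib]
  apply Finset.sum_congr rfl
  intro x _
  by_cases h : x i = a <;> cases hxj : x j <;> simp [h, hxj]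

lemma corr_expand (P : (V → Bool) → ℝ) (i j : V) :
    corr P i j = marg2 P i j (true, true) - marg2 P i j (true, false)
      - marg2 P i j (false, true) + marg2 P i j (false, false) := by
  unfold corr
  rw [Fintype.sum_prod_type]
  simp [Fintype.sum_bool, spin]
  ring

lemma marg2_corr (P : (V → Bool) → ℝ) (hunif : ∀ (i : V) (a : Bool), marg1 P i a = 1 / 2)
    (i j : V) (a b : Bool) :
    marg2 P i j (a, b) = (1 + spin a * spin b * corr P i j) / 4 := by
  have r1 := marg2_row P i j true; rw [hunif] at r1
  have r2 := marg2_row P i j false; rw [hunif] at r2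
  have c1 : marg2 P i j (true, true) + marg2 P i j (false, true) = 1/2 := by
    rw [marg2_symm P i j true true, marg2_symm P i j false true]
    have := marg2_row P j i true; rw [hunif] at this; exact this
  have e := corr_expand P i j
  cases a <;> cases b <;> simp only [spin, if_pos, if_neg, Bool.false_eq_true,
    not_false_iff, if_true, if_false] <;> linarith

lemma P_factor (T : SimpleGraph V) (P : (V → Bool) → ℝ)
    (hMarkov : IsMarkovTree T P) (hunif : ∀ (i : V) (a : Bool), marg1 P i a = 1 / 2)
    (x : V → Bool) :
    P x = (1/2)^(Fintype.card V) * ∏ e ∈ T.edgeFinset, (espE x e * corrE P e + 1) := by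
  rw [hMarkov x]
  congr 1
  · rw [Finset.prod_congr rfl (fun i _ => hunif i (x i))]
    simp
  · rw [show (∏ e : Sym2 V, if e ∈ T.edgeSet then edgeFactor P x e else 1)
        = ∏ e ∈ Finset.univ.filter (fun e => e ∈ T.edgeSet), edgeFactor P x e from
      (Finset.prod_filter _ _).symm]
    have huniv : Finset.univ.filter (fun e => e ∈ T.edgeSet) = T.edgeFinset := by
      ext e; simp [SimpleGraph.mem_edgeFinset]
    rw [huniv]
    apply Finset.prod_congr rfl
    intro e he
    revert he
    induction e using Sym2.inductionOn with | _ i j => ?_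
    intro he
    have hadj : T.Adj i j := SimpleGraph.mem_edgeFinset.mp he
    show marg2 P i j (x i, x j) / (marg1 P i (x i) * marg1 P j (x j)) = _
    rw [marg2_corr P hunif, hunif, hunif, espE_mk, corrE_mk]
    ring

lemma prod_espE (x : V → Bool) (S : Finset (Sym2 V)) (hS : ∀ e ∈ S, ¬ e.IsDiag) :
    ∏ e ∈ S, espE x e = ∏ v, spin (x v) ^ ((S.filter (fun e => v ∈ e)).card) := by
  induction S using Finset.induction_on with
  | empty => simp
  | @insert e S he ih =>
    rw [Finset.prod_insert he, ih (fun f hf => hS f (Finset.mem_insert_of_mem hf))]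
    have hdeg : ∀ v, (((insert e S).filter (fun f => v ∈ f)).card : ℕ)
        = (S.filter (fun f => v ∈ f)).card + (if v ∈ e then 1 else 0) := by
      intro v
      rw [Finset.filter_insert]
      by_cases h : v ∈ e
      · rw [if_pos h, if_pos h, Finset.card_insert_of_notMem
          (fun hc => he (Finset.mem_of_mem_filter _ hc))]
      · rw [if_neg h, if_neg h, add_zero]
    simp_rw [hdeg, pow_add]
    rw [Finset.prod_mul_distrib, mul_comm]
    congr 1
    have hed : ¬ e.IsDiag := hS e (Finset.mem_insert_self e S)
    revert hed
    induction e using Sym2.inductionOn with | _ i j => ?_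
    intro hed
    have hij : i ≠ j := by simpa [Sym2.mk_isDiag_iff] using hed
    rw [espE_mk]
    have hpt : ∀ v, spin (x v) ^ (if v ∈ s(i,j) then 1 else 0)
        = if v ∈ ({i, j} : Finset V) then spin (x v) else 1 := by
      intro v
      by_cases h : v ∈ s(i,j)
      · rw [if_pos h, pow_one, if_pos (by simpa [Sym2.mem_iff] using h)]
      · rw [if_neg h, pow_zero, if_neg (by simpa [Sym2.mem_iff] using h)]
    rw [Finset.prod_congr rfl (fun v _ => hpt v)]
    rw [Finset.prod_ite_mem Finset.univ ({i, j} : Finset V) (fun v => spin (x v))]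
    rw [Finset.univ_inter, Finset.prod_pair hij]

lemma spin_pow_sum (d : ℕ) : (spin true) ^ d + (spin false) ^ d = if Even d then 2 else 0 := by
  rcases Nat.even_or_odd d with h | h
  · rw [if_pos h]; simp [spin, h.neg_one_pow]; norm_num
  · rw [if_neg (Nat.not_even_iff_odd.mpr h)]; simp [spin, h.neg_one_pow]

lemma sum_prod_spin (D : V → ℕ) :
    ∑ x : V → Bool, ∏ v, spin (x v) ^ (D v)
      = if (∀ v, Even (D v)) then (2:ℝ)^(Fintype.card V) else 0 := by
  have key := Finset.prod_univ_sum (fun _ : V => (Finset.univ : Finset Bool))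
    (fun v y => spin y ^ (D v))
  rw [Fintype.piFinset_univ] at key
  rw [← key]
  have hpt : ∀ v : V, (∑ y ∈ (Finset.univ : Finset Bool), spin y ^ (D v))
      = if Even (D v) then (2:ℝ) else 0 := by
    intro v; rw [Fintype.sum_bool]; exact spin_pow_sum (D v)
  rw [Finset.prod_congr rfl (fun v _ => hpt v)]
  by_cases h : ∀ v, Even (D v)
  · rw [if_pos h, Finset.prod_congr rfl (fun v _ => if_pos (h v))]
    simp
  · rw [if_neg h]
    push_neg at h
    obtain ⟨v, hv⟩ := h
    exact Finset.prod_eq_zero (Finset.mem_univ v) (if_neg hv)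

lemma spin_pull (x : V → Bool) (a : V) :
    ∏ v, spin (x v) ^ (if v = a then 1 else 0) = spin (x a) := by
  rw [Finset.prod_eq_single a]
  · simp
  · intro v _ hv; simp [hv]
  · intro h; exact absurd (Finset.mem_univ a) h

lemma toFinset_filter_card {l : List (Sym2 V)} (hl : l.Nodup) (v : V) :
    (l.toFinset.filter (fun e => v ∈ e)).card = l.countP (fun e => decide (v ∈ e)) := by
  induction l with
  | nil => simp
  | cons e l ih =>
    rw [List.toFinset_cons, List.countP_cons]
    obtain ⟨hne, hnd⟩ := List.nodup_cons.mp hl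
    rw [Finset.filter_insert]
    by_cases h : v ∈ e
    · rw [if_pos h, Finset.card_insert_of_notMem
        (fun hc => hne (List.mem_toFinset.mp (Finset.mem_of_mem_filter _ hc))),
        ih hnd]
      simp [h]
    · rw [if_neg h, ih hnd]
      simp [h]

theorem corr_prod (T : SimpleGraph V) (hT : T.IsTree) (P : (V → Bool) → ℝ)
    (hP : IsProbDist P) (hMarkov : IsMarkovTree T P)
    (hunif : ∀ (i : V) (a : Bool), marg1 P i a = 1 / 2)
    {a b : V} (p : T.Walk a b) (hp : p.IsPath) :
    corr P a b = (p.edges.map (corrE P)).prod := by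
  rcases eq_or_ne a b with rfl | hab
  · rw [SimpleGraph.Walk.isPath_iff_eq_nil.mp hp]
    simp [corr_self P hP a]
  · set n := Fintype.card V with hn
    set S₀ : Finset (Sym2 V) := p.edges.toFinset with hS₀
    have hnodup : p.edges.Nodup := hp.edges_nodup
    have hS₀sub : ∀ e ∈ S₀, e ∈ T.edgeSet :=
      fun e he => p.edges_subset_edgeSet (List.mem_toFinset.mp he)
    -- the parity condition
    have hS₀par : ∀ v, Even ((S₀.filter (fun e => v ∈ e)).card
        + ((if v = a then 1 else 0) + (if v = b then 1 else 0))) := by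
      intro v
      rw [hS₀, toFinset_filter_card hnodup v]
      exact walk_edge_parity p v
    rw [corr_eq_sum]
    have hfac : ∀ x : V → Bool, P x * (spin (x a) * spin (x b))
        = (1/2)^n * ((∏ e ∈ T.edgeFinset, (espE x e * corrE P e + 1)) * (spin (x a) * spin (x b))) := by
      intro x; rw [P_factor T P hMarkov hunif x]; ring
    rw [Finset.sum_congr rfl (fun x _ => hfac x), ← Finset.mul_sum]
    have hexp : ∀ x : V → Bool, (∏ e ∈ T.edgeFinset, (espE x e * corrE P e + 1)) * (spin (x a) * spin (x b))
        = ∑ t ∈ T.edgeFinset.powerset,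
            (∏ e ∈ t, corrE P e) * ((∏ e ∈ t, espE x e) * (spin (x a) * spin (x b))) := by
      intro x
      rw [Finset.prod_add, Finset.sum_mul]
      apply Finset.sum_congr rfl
      intro t _
      rw [Finset.prod_const_one, mul_one, Finset.prod_mul_distrib]
      ring
    rw [Finset.sum_congr rfl (fun x _ => hexp x), Finset.sum_comm]
    -- inner sums
    have hinner : ∀ t ∈ T.edgeFinset.powerset,
        (∑ x : V → Bool, (∏ e ∈ t, corrE P e) * ((∏ e ∈ t, espE x e) * (spin (x a) * spin (x b))))
        = (∏ e ∈ t, corrE P e) *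
          (if (∀ v, Even ((t.filter (fun e => v ∈ e)).card
            + ((if v = a then 1 else 0) + (if v = b then 1 else 0)))) then (2:ℝ)^n else 0) := by
      intro t ht
      rw [← Finset.mul_sum]
      congr 1
      have htsub := Finset.mem_powerset.mp ht
      have htdiag : ∀ e ∈ t, ¬ e.IsDiag := fun e he =>
        T.not_isDiag_of_mem_edgeSet (SimpleGraph.mem_edgeFinset.mp (htsub he))
      have hsp : ∀ x : V → Bool, (∏ e ∈ t, espE x e) * (spin (x a) * spin (x b))
          = ∏ v, spin (x v) ^ ((t.filter (fun e => v ∈ e)).card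
              + ((if v = a then 1 else 0) + (if v = b then 1 else 0))) := by
        intro x
        simp_rw [pow_add]
        rw [Finset.prod_mul_distrib, Finset.prod_mul_distrib, spin_pull, spin_pull,
          prod_espE x t htdiag]
      rw [Finset.sum_congr rfl (fun x _ => hsp x), sum_prod_spin]
    rw [Finset.sum_congr rfl hinner]
    -- single surviving term
    rw [Finset.sum_eq_single_of_mem S₀
      (Finset.mem_powerset.mpr (fun e he => SimpleGraph.mem_edgeFinset.mpr (hS₀sub e he)))]
    · rw [if_pos hS₀par, hS₀, List.prod_toFinset (corrE P) hnodup]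
      have h12 : ((1:ℝ)/2)^n * (2:ℝ)^n = 1 := by rw [← mul_pow]; norm_num
      linear_combination (List.map (corrE P) p.edges).prod * h12
    · intro t ht htne
      rw [if_neg, mul_zero]
      intro hcon
      apply htne
      apply parity_unique hT.IsAcyclic t S₀
        (fun e he => SimpleGraph.mem_edgeFinset.mp (Finset.mem_powerset.mp ht he)) hS₀sub
      intro v
      have h1 := hcon v
      have h2 := hS₀par v
      rw [Nat.even_iff] at h1 h2
      omega

lemma corrE_le {T : SimpleGraph V} {P : (V → Bool) → ℝ} {m : ℝ}
    (hub : ∀ c d, T.Adj c d → |corr P c d| ≤ m) {e : Sym2 V} (he : e ∈ T.edgeSet) :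
    |corrE P e| ≤ m := by
  revert he
  induction e using Sym2.inductionOn with | _ i j => ?_
  intro he
  exact hub i j he

lemma abs_prod_edges_le {T : SimpleGraph V} {P : (V → Bool) → ℝ} {m : ℝ}
    (hub : ∀ c d, T.Adj c d → |corr P c d| ≤ m) (hm0 : 0 ≤ m)
    (l : List (Sym2 V)) (hl : ∀ e ∈ l, e ∈ T.edgeSet) :
    |(l.map (corrE P)).prod| ≤ m ^ l.length := by
  induction l with
  | nil => simp
  | cons e l ih =>
    rw [List.map_cons, List.prod_cons, abs_mul, List.length_cons, pow_succ, mul_comm (m ^ l.length) m]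
    exact mul_le_mul (corrE_le hub (hl e (List.mem_cons_self)))
      (ih (fun f hf => hl f (List.mem_cons_of_mem e hf))) (abs_nonneg _)
      hm0

lemma corr_le_max {T : SimpleGraph V} (hT : T.IsTree) {P : (V → Bool) → ℝ}
    (hP : IsProbDist P) (hMarkov : IsMarkovTree T P)
    (hunif : ∀ (i : V) (a : Bool), marg1 P i a = 1 / 2) {m : ℝ}
    (hub : ∀ c d, T.Adj c d → |corr P c d| ≤ m) (hm0 : 0 ≤ m) (hm1 : m ≤ 1)
    {x y : V} (hxy : x ≠ y) : |corr P x y| ≤ m := by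
  obtain ⟨wk⟩ := hT.isConnected.preconnected x y
  have hp : wk.bypass.IsPath := SimpleGraph.Walk.bypass_isPath wk
  rw [corr_prod T hT P hP hMarkov hunif wk.bypass hp]
  have hlen : wk.bypass.edges.length ≠ 0 := by
    intro h0
    rw [SimpleGraph.Walk.length_edges] at h0
    exact hxy (SimpleGraph.Walk.eq_of_length_eq_zero h0)
  calc |(wk.bypass.edges.map (corrE P)).prod| ≤ m ^ wk.bypass.edges.length :=
        abs_prod_edges_le hub hm0 _ (fun e he => wk.bypass.edges_subset_edgeSet he)
    _ ≤ m := pow_le_of_le_one hm0 hm1 hlen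

lemma first_edge {T : SimpleGraph V} {w wb u2 : V} (r : T.Walk w u2) (hr : r.IsPath)
    (he : s(w, wb) ∈ r.edges) :
    ∃ r' : T.Walk wb u2, r'.IsPath ∧ r.edges = s(w, wb) :: r'.edges := by
  cases r with
  | nil => simp at he
  | @cons _ x _ h r₂ =>
    rw [SimpleGraph.Walk.edges_cons] at he ⊢
    have hsplit := (SimpleGraph.Walk.cons_isPath_iff h r₂).mp hr
    rcases List.mem_cons.mp he with heq | hmem
    · have hx : wb = x := by
        rcases Sym2.eq_iff.mp heq with ⟨-, h2⟩ | ⟨h1, -⟩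
        · exact h2
        · exact absurd h1 h.ne
      subst hx
      exact ⟨r₂, hsplit.1, rfl⟩
    · exact absurd (SimpleGraph.Walk.fst_mem_support_of_mem_edges r₂ hmem) hsplit.2

lemma edge_ends_not_mem {T : SimpleGraph V} {u ub : V} (p : T.Walk u ub) (hp : p.IsPath)
    (hlen : 2 ≤ p.length) : s(u, ub) ∉ p.edges := by
  intro he
  cases p with
  | nil => simp at he
  | @cons _ x _ h p₂ =>
    rw [SimpleGraph.Walk.edges_cons] at he
    have hsplit := (SimpleGraph.Walk.cons_isPath_iff h p₂).mp hp
    rcases List.mem_cons.mp he with heq | hmem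
    · rcases Sym2.eq_iff.mp heq with ⟨-, h2⟩ | ⟨h1, -⟩
      · subst h2
        have hnil : p₂ = SimpleGraph.Walk.nil := SimpleGraph.Walk.isPath_iff_eq_nil.mp hsplit.1
        rw [SimpleGraph.Walk.length_cons, hnil] at hlen
        simp at hlen
      · exact h.ne h1
    · exact hsplit.2 (SimpleGraph.Walk.fst_mem_support_of_mem_edges p₂ hmem)

lemma thresh_nonempty {T : SimpleGraph V} {I : V → V → ℝ} (h : 0 < thresh T I) :
    ∃ w wb u ub : V, EVtuple T w wb u ub := by
  by_contra hn
  push_neg at hn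
  have hempty : {x : ℝ | ∃ w wb u ub : V, EVtuple T w wb u ub ∧ x = I w wb - I u ub} = ∅ := by
    ext x
    simp only [Set.mem_setOf_eq, Set.mem_empty_iff_false, iff_false]
    rintro ⟨w, wb, u, ub, ht, -⟩
    exact hn w wb u ub ht
  unfold thresh at h
  rw [hempty, Real.sInf_empty, mul_zero] at h
  exact lt_irrefl 0 h

lemma thresh_pos_of {T : SimpleGraph V} {I : V → V → ℝ}
    (hne : ∃ w wb u ub : V, EVtuple T w wb u ub)
    (hpos : ∀ w wb u ub : V, EVtuple T w wb u ub → 0 < I w wb - I u ub) :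
    0 < thresh T I := by
  set S := {x : ℝ | ∃ w wb u ub : V, EVtuple T w wb u ub ∧ x = I w wb - I u ub} with hS
  have hfin : S.Finite := by
    apply Set.Finite.subset (Set.finite_range
      (fun t : V × V × V × V => I t.1 t.2.1 - I t.2.2.1 t.2.2.2))
    rintro x ⟨w, wb, u, ub, -, rfl⟩
    exact ⟨(w, wb, u, ub), rfl⟩
  obtain ⟨w, wb, u, ub, ht⟩ := hne
  have hSne : S.Nonempty := ⟨I w wb - I u ub, w, wb, u, ub, ht, rfl⟩
  have hmem := hSne.csInf_mem hfin
  obtain ⟨w', wb', u', ub', ht', hx⟩ := hmem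
  have : 0 < sInf S := hx ▸ hpos w' wb' u' ub' ht'
  unfold thresh
  rw [← hS]
  linarith

lemma maxEdgeCorr_spec {T : SimpleGraph V} (P : (V → Bool) → ℝ)
    (hedge : ∃ a b : V, T.Adj a b) :
    (∃ a b : V, T.Adj a b ∧ maxEdgeCorr T P = |corr P a b|) ∧
      (∀ c d : V, T.Adj c d → |corr P c d| ≤ maxEdgeCorr T P) := by
  set S := {x : ℝ | ∃ a b : V, T.Adj a b ∧ x = |corr P a b|} with hS
  have hfin : S.Finite := by
    apply Set.Finite.subset (Set.finite_range (fun t : V × V => |corr P t.1 t.2|))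
    rintro x ⟨a, b, -, rfl⟩
    exact ⟨(a, b), rfl⟩
  obtain ⟨a0, b0, hadj⟩ := hedge
  have hSne : S.Nonempty := ⟨|corr P a0 b0|, a0, b0, hadj, rfl⟩
  constructor
  · obtain ⟨a, b, hab, hx⟩ := hSne.csSup_mem hfin
    exact ⟨a, b, hab, hx⟩
  · intro c d hcd
    exact le_csSup hfin.bddAbove ⟨c, d, hcd, rfl⟩

lemma noisyPair_eq (P : (V → Bool) → ℝ)
    (hunif : ∀ (i : V) (a : Bool), marg1 P i a = 1 / 2) (q : V → ℝ) (i j : V) :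
    noisyPair P q i j = fun ab : Bool × Bool =>
      (1 + spin ab.1 * spin ab.2 * ((1 - 2*q i) * (1 - 2*q j) * corr P i j)) / 4 := by
  funext ab
  have hm : ∀ x : Bool × Bool, marg2 P i j x = (1 + spin x.1 * spin x.2 * corr P i j) / 4 :=
    fun ⟨a, b⟩ => marg2_corr P hunif i j a b
  unfold noisyPair
  simp_rw [hm]
  rw [Fintype.sum_prod_type]
  simp only [Fintype.sum_bool, Fintype.sum_prod_type]
  obtain ⟨α, β⟩ := ab
  cases α <;> cases β <;>
    simp only [bern, spin, Bool.xor_true, Bool.xor_false, Bool.not_true, Bool.not_false,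
      Prod.mk.injEq, if_true, if_false, Bool.true_eq_false, Bool.false_eq_true, and_true,
      and_false, true_and, false_and, if_neg, not_false_iff, ite_true, ite_false] <;>
    norm_num <;> ring

lemma ent_eq_entF {α : Type*} [Fintype α] (f : α → ℝ) : ent f = entF f := by
  unfold ent entF
  rw [tsum_fintype]

lemma mi_eq_hfun (P : (V → Bool) → ℝ)
    (hunif : ∀ (i : V) (a : Bool), marg1 P i a = 1 / 2) (i j : V) :
    mi P i j = hfun (corr P i j) := by
  have hrow : (fun a => ∑ b, marg2 P i j (a, b)) = marg1 P i :=
    funext (fun a => by rw [Fintype.sum_bool]; exact marg2_row P i j a)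
  have hcol : (fun b => ∑ a, marg2 P i j (a, b)) = marg1 P j :=
    funext (fun b => by
      rw [Fintype.sum_bool, marg2_symm P i j true b, marg2_symm P i j false b]
      exact marg2_row P j i b)
  have h1 : mi P i j = miF (marg2 P i j) := by
    unfold mi miF
    rw [ent_eq_entF, ent_eq_entF, ent_eq_entF, hrow, hcol]
  rw [h1, show marg2 P i j = (fun ab : Bool × Bool =>
      (1 + spin ab.1 * spin ab.2 * corr P i j) / 4) from
    funext (fun ⟨a, b⟩ => marg2_corr P hunif i j a b)]
  exact miF_of_corr _

lemma noisy_miF (P : (V → Bool) → ℝ)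
    (hunif : ∀ (i : V) (a : Bool), marg1 P i a = 1 / 2) (q : V → ℝ) (i j : V) :
    miF (noisyPair P q i j) = hfun ((1 - 2*q i) * (1 - 2*q j) * corr P i j) := by
  rw [noisyPair_eq P hunif q i j]
  exact miF_of_corr _

end AuxCorr

/-- **Sufficient condition for a positive noisy information threshold under
non-identically distributed binary symmetric noise.**  If the hidden `±1`-valued
tree model has `I^o > 0` and edge correlations in `(0, 1)` in absolute value, and
the crossover probabilities satisfy
`(1 − 2q_i)/(1 − 2q_j) ∈ (max_E |E[X_i X_j]|, 1/max_E |E[X_i X_j]|)` for all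
`i, j`, then the noisy information threshold is positive, `I^o_† > 0`;
in particular, if all `q_i` are equal the condition always holds. -/
theorem noisy_threshold_pos_nonidentical_bsc
    {V : Type*} [Fintype V] [DecidableEq V]
    (T : SimpleGraph V) (hT : T.IsTree)
    (P : (V → Bool) → ℝ) (hP : IsProbDist P) (hMarkov : IsMarkovTree T P)
    (hunif : ∀ (i : V) (a : Bool), marg1 P i a = 1 / 2)
    (hthresh : 0 < thresh T (mi P))
    (hcorr : ∀ i j : V, T.Adj i j → |corr P i j| ∈ Set.Ioo (0 : ℝ) 1)
    (q : V → ℝ) (hq : ∀ i, q i ∈ Set.Ico (0 : ℝ) (1 / 2)) :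
    ((∀ i j : V, (1 - 2 * q i) / (1 - 2 * q j) ∈
        Set.Ioo (maxEdgeCorr T P) (1 / maxEdgeCorr T P)) →
      0 < thresh T (fun i j => miF (noisyPair P q i j))) ∧
    ((∀ i j : V, q i = q j) →
      ∀ i j : V, (1 - 2 * q i) / (1 - 2 * q j) ∈
        Set.Ioo (maxEdgeCorr T P) (1 / maxEdgeCorr T P)) := by
  classical
  obtain ⟨w0, wb0, u0, ub0, ht0⟩ := thresh_nonempty hthresh
  have hedge : ∃ a b : V, T.Adj a b := ⟨w0, wb0, ht0.1⟩
  obtain ⟨⟨a0, b0, hadj0, hMeq⟩, hMub⟩ := maxEdgeCorr_spec P hedge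
  have hm0 : 0 < maxEdgeCorr T P := by rw [hMeq]; exact (hcorr a0 b0 hadj0).1
  have hm1 : maxEdgeCorr T P < 1 := by rw [hMeq]; exact (hcorr a0 b0 hadj0).2
  have hq1 : ∀ i, 0 < 1 - 2 * q i := fun i => by have := (hq i).2; simp at this; linarith
  have hqle : ∀ i, 1 - 2 * q i ≤ 1 := fun i => by have := (hq i).1; linarith
  have habs_le_one : ∀ i j : V, |corr P i j| ≤ 1 →
      |(1 - 2*q i) * (1 - 2*q j) * corr P i j| ≤ 1 := by
    intro i j hc
    rw [abs_mul, abs_mul, abs_of_pos (hq1 i), abs_of_pos (hq1 j)]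
    have hab : (1 - 2*q i) * (1 - 2*q j) ≤ 1 :=
      mul_le_one₀ (hqle i) (hq1 j).le (hqle j)
    exact mul_le_one₀ hab (abs_nonneg _) hc
  constructor
  · intro hratio
    have hkey : ∀ a1 b1 : V, ((1 - 2*q a1) * |corr P a1 b1| ≤ 1 - 2*q b1) ∧
        (a1 ≠ b1 → (1 - 2*q a1) * |corr P a1 b1| < 1 - 2*q b1) := by
      intro a1 b1
      rcases eq_or_ne a1 b1 with rfl | hne
      · rw [corr_self P hP, abs_one, mul_one]
        exact ⟨le_refl _, fun h => absurd rfl h⟩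
      · have hle : |corr P a1 b1| ≤ maxEdgeCorr T P :=
          corr_le_max hT hP hMarkov hunif hMub hm0.le hm1.le hne
        have hr := (hratio a1 b1).2
        rw [div_lt_div_iff₀ (hq1 b1) hm0] at hr
        have h2 : (1 - 2*q a1) * |corr P a1 b1| ≤ (1 - 2*q a1) * maxEdgeCorr T P :=
          mul_le_mul_of_nonneg_left hle (hq1 a1).le
        exact ⟨by linarith, fun _ => by linarith⟩
    apply thresh_pos_of ⟨w0, wb0, u0, ub0, ht0⟩
    rintro w wb u ub ⟨hadj, p, hp, hep, hlen⟩
    have hune : u ≠ ub := by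
      rintro rfl
      have hnil := SimpleGraph.Walk.isPath_iff_eq_nil.mp hp
      rw [hnil] at hlen
      simp at hlen
    have hwsup : w ∈ p.support := SimpleGraph.Walk.fst_mem_support_of_mem_edges p hep
    have hq1p : (p.takeUntil w hwsup).IsPath := hp.takeUntil hwsup
    have hrp : (p.dropUntil w hwsup).IsPath := hp.dropUntil hwsup
    have hedges : p.edges = (p.takeUntil w hwsup).edges ++ (p.dropUntil w hwsup).edges := by
      conv_lhs => rw [← SimpleGraph.Walk.take_spec p hwsup]
      rw [SimpleGraph.Walk.edges_append]
    have PF : ∀ {x y : V} (wkk : T.Walk x y), wkk.IsPath →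
        corr P x y = (wkk.edges.map (corrE P)).prod :=
      fun wkk hwk => corr_prod T hT P hP hMarkov hunif wkk hwk
    have e1 : corr P u ub = corr P u w * corr P w ub := by
      rw [PF p hp, hedges, List.map_append, List.prod_append,
        ← PF (p.takeUntil w hwsup) hq1p, ← PF (p.dropUntil w hwsup) hrp]
    obtain ⟨s1, t1, hst, heq3, hne3⟩ :
        ∃ s1 t1 : V, s(s1, t1) = s(w, wb) ∧
          corr P u ub = corr P w wb * (corr P u s1 * corr P t1 ub) ∧ ¬(u = s1 ∧ ub = t1) := by
      rcases List.mem_append.mp (hedges ▸ hep) with hin | hin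
      · have hrev : s(w, wb) ∈ (p.takeUntil w hwsup).reverse.edges := by
          rw [SimpleGraph.Walk.edges_reverse, List.mem_reverse]; exact hin
        obtain ⟨rr, hrrp, hrre⟩ := first_edge (p.takeUntil w hwsup).reverse hq1p.reverse hrev
        refine ⟨wb, w, Sym2.eq_swap, ?_, ?_⟩
        · have e2 : corr P w u = corr P w wb * corr P wb u := by
            rw [PF (p.takeUntil w hwsup).reverse hq1p.reverse, hrre, List.map_cons,
              List.prod_cons, ← PF rr hrrp, corrE_mk]
          rw [e1, corr_symm P u w, e2, corr_symm P wb u]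
          ring
        · rintro ⟨rfl, rfl⟩
          apply edge_ends_not_mem p hp hlen
          rw [Sym2.eq_swap]
          exact hep
      · obtain ⟨r', hr'p, hr'e⟩ := first_edge (p.dropUntil w hwsup) hrp hin
        refine ⟨w, wb, rfl, ?_, ?_⟩
        · have e2 : corr P w ub = corr P w wb * corr P wb ub := by
            rw [PF (p.dropUntil w hwsup) hrp, hr'e, List.map_cons, List.prod_cons,
              ← PF r' hr'p, corrE_mk]
          rw [e1, e2]
          ring
        · rintro ⟨rfl, rfl⟩
          exact edge_ends_not_mem p hp hlen hep
    have hρe := hcorr w wb hadj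
    have hcst : (1 - 2*q s1) * (1 - 2*q t1) = (1 - 2*q w) * (1 - 2*q wb) := by
      rcases Sym2.eq_iff.mp hst with ⟨rfl, rfl⟩ | ⟨rfl, rfl⟩ <;> ring
    have hone : (1 - 2*q u) * |corr P u s1| < 1 - 2*q s1 ∨
        (1 - 2*q ub) * |corr P ub t1| < 1 - 2*q t1 := by
      rcases not_and_or.mp hne3 with h | h
      · exact Or.inl ((hkey u s1).2 h)
      · exact Or.inr ((hkey ub t1).2 h)
    have habs3 : |corr P u ub| = |corr P w wb| * (|corr P u s1| * |corr P ub t1|) := by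
      rw [heq3, abs_mul, abs_mul, corr_symm P t1 ub]
    have hx_lt : (1-2*q u) * (1-2*q ub) * |corr P u ub|
        < (1-2*q w) * (1-2*q wb) * |corr P w wb| := by
      rw [habs3, ← hcst]
      have h1 : (1-2*q u) * |corr P u s1| ≤ 1 - 2*q s1 := (hkey u s1).1
      have h2 : (1-2*q ub) * |corr P ub t1| ≤ 1 - 2*q t1 := (hkey ub t1).1
      have p1 : 0 ≤ (1-2*q u) * |corr P u s1| := mul_nonneg (hq1 u).le (abs_nonneg _)
      have p2 : 0 ≤ (1-2*q ub) * |corr P ub t1| := mul_nonneg (hq1 ub).le (abs_nonneg _)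
      have hprod : ((1-2*q u) * |corr P u s1|) * ((1-2*q ub) * |corr P ub t1|)
          < (1 - 2*q s1) * (1 - 2*q t1) := by
        rcases hone with h | h
        · nlinarith [hq1 s1, hq1 t1]
        · nlinarith [hq1 s1, hq1 t1]
      nlinarith [mul_lt_mul_of_pos_left hprod hρe.1]
    have hcorr1 : |corr P u ub| ≤ 1 :=
      le_trans (corr_le_max hT hP hMarkov hunif hMub hm0.le hm1.le hune) hm1.le
    have hx1 : |(1-2*q u) * (1-2*q ub) * corr P u ub| ≤ 1 := habs_le_one u ub hcorr1
    have hy1 : |(1-2*q w) * (1-2*q wb) * corr P w wb| ≤ 1 := habs_le_one w wb hρe.2.le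
    have hax : |(1-2*q u) * (1-2*q ub) * corr P u ub|
        = (1-2*q u) * (1-2*q ub) * |corr P u ub| := by
      rw [abs_mul, abs_mul, abs_of_pos (hq1 u), abs_of_pos (hq1 ub)]
    have hay : |(1-2*q w) * (1-2*q wb) * corr P w wb|
        = (1-2*q w) * (1-2*q wb) * |corr P w wb| := by
      rw [abs_mul, abs_mul, abs_of_pos (hq1 w), abs_of_pos (hq1 wb)]
    have hfin : miF (noisyPair P q u ub) < miF (noisyPair P q w wb) := by
      rw [noisy_miF P hunif q w wb, noisy_miF P hunif q u ub,
        ← hfun_abs ((1-2*q w) * (1-2*q wb) * corr P w wb),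
        ← hfun_abs ((1-2*q u) * (1-2*q ub) * corr P u ub)]
      apply hfun_strictMonoOn ⟨abs_nonneg _, hx1⟩ ⟨abs_nonneg _, hy1⟩
      rw [hax, hay]
      exact hx_lt
    linarith
  · intro hqeq i j
    have hcj : (1:ℝ) - 2 * q j ≠ 0 := (hq1 j).ne'
    rw [hqeq i j, div_self hcj]
    refine Set.mem_Ioo.mpr ⟨hm1, ?_⟩
    rw [lt_div_iff₀ hm0]
    linarith


end TreePaper
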